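/- Under the Lyapunov condition K^{(n)}_η V(x) ≤ a_n V(x) + b_n η(V) + c (for all x ∈ R^d, η ∈ P(R^d)), if the N-particle system has E[η^N_0(V)] < ∞, then E[Φ_{n+1}[η^N_n](V)] ≤ A(n+1)·E[η^N_0(V)] + c·Σ_{k=1}^{n+1} Π_{j=k+1}^{n+1}(a_j + b_j), where A(m) = Π_{i=1}^m (a_i + b_i), Φ_{n+1}[μ] := μK^{(n+1)}_μ, and η^N_n is the empirical measure of the particle system. In particular E[V(X^1_n)] = E[η^N_n(V)] satisfies the same recursion as the mean-field moments. -/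

import Mathlib

open MeasureTheory ENNReal

noncomputable section

abbrev Ed (d : ℕ) := EuclideanSpace ℝ (Fin d)

/-- Optimal transport cost between two measures for a given cost function. -/
def Wc {X Y : Type*} [MeasurableSpace X] [MeasurableSpace Y] (cost : X → Y → ℝ)
    (μ : Measure X) (ν : Measure Y) : ℝ :=
  sInf {r | ∃ γ : Measure (X × Y), γ.map Prod.fst = μ ∧ γ.map Prod.snd = ν ∧
    r = ∫ p, cost p.1 p.2 ∂γ}

/-- 1-Wasserstein distance. -/
def W1 {X : Type*} [MeasurableSpace X] [PseudoMetricSpace X] (μ ν : Measure X) : ℝ :=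
  Wc dist μ ν

/-- ℓ₂ product cost on (ℝ^d)^q. -/
def l2cost {d q : ℕ} (x y : Fin q → Ed d) : ℝ := Real.sqrt (∑ i, ‖x i - y i‖ ^ 2)

/-- 1-Wasserstein distance on the product space with the ℓ₂ product metric. -/
def W1q {d q : ℕ} (μ ν : Measure (Fin q → Ed d)) : ℝ := Wc l2cost μ ν

/-- Empirical measure of `N` points. -/
def emp {X : Type*} [MeasurableSpace X] {N : ℕ} (x : Fin N → X) : Measure X :=
  (N : ℝ≥0∞)⁻¹ • ∑ i, Measure.dirac (x i)

/-- Membership in P₁: probability with finite first moment. -/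
def memP1 {X : Type*} [MeasurableSpace X] [NormedAddCommGroup X] (μ : Measure X) : Prop :=
  IsProbabilityMeasure μ ∧ HasFiniteIntegral (fun x => ‖x‖) μ

open ProbabilityTheory in
/-- A measurable family of probability measures has a measurable product. -/
lemma measurable_pi_of_measurable {α X : Type*} [MeasurableSpace α] [MeasurableSpace X] :
    ∀ {n : ℕ} (f : α → Fin n → Measure X),
      (∀ a i, IsProbabilityMeasure (f a i)) → (∀ i, Measurable fun a => f a i) →
      Measurable fun a => Measure.pi (f a) := by
  intro n
  induction n with
  | zero =>
    intro f hp hm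
    have : (fun a => Measure.pi (f a))
        = fun _ => Measure.dirac (isEmptyElim : ∀ _ : Fin 0, X) := by
      funext a
      exact Measure.pi_of_empty (f a)
    rw [this]; exact measurable_const
  | succ n ih =>
    intro f hp hm
    set e := MeasurableEquiv.piFinSuccAbove (fun _ : Fin (n + 1) => X) 0 with he
    have hκ2m : Measurable fun a => Measure.pi fun j => f a ((0 : Fin (n+1)).succAbove j) :=
      ih _ (fun a j => hp a _) (fun j => hm _)
    let κ1 : Kernel α X := ⟨fun a => f a 0, hm 0⟩
    haveI : IsMarkovKernel κ1 := ⟨fun a => hp a 0⟩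
    let κ2 : Kernel α (Fin n → X) :=
      ⟨fun a => Measure.pi fun j => f a ((0 : Fin (n+1)).succAbove j), hκ2m⟩
    haveI : IsMarkovKernel κ2 := ⟨fun a => by
      haveI := fun j => hp a ((0 : Fin (n+1)).succAbove j)
      exact inferInstanceAs (IsProbabilityMeasure (Measure.pi _))⟩
    have hprod : Measurable fun a =>
        (f a 0).prod (Measure.pi fun j => f a ((0 : Fin (n+1)).succAbove j)) := by
      have hco : ⇑(κ1 ×ₖ κ2) = fun a =>
          (f a 0).prod (Measure.pi fun j => f a ((0 : Fin (n+1)).succAbove j)) := by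
        funext a
        rw [Kernel.prod_apply]
        rfl
      have := (κ1 ×ₖ κ2).measurable
      rwa [hco] at this
    have heq : (fun a => Measure.pi (f a)) = fun a =>
        (((f a 0).prod (Measure.pi fun j => f a ((0 : Fin (n+1)).succAbove j))).map e.symm) := by
      funext a
      haveI := hp a
      have h := (measurePreserving_piFinSuccAbove (f a) 0).map_eq
      rw [← h, Measure.map_map e.symm.measurable e.measurable]
      simp
    rw [heq]
    exact (Measure.measurable_map _ e.symm.measurable).comp hprod

/-- Marginal of a product of probability measures. -/
lemma pi_map_eval {X : Type*} [MeasurableSpace X] {n : ℕ} (μ : Fin n → Measure X)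
    [∀ i, IsProbabilityMeasure (μ i)] (i : Fin n) :
    (Measure.pi μ).map (Function.eval i) = μ i := by
  ext s hs
  rw [Measure.map_apply (measurable_pi_apply i) hs, Set.eval_preimage, Measure.pi_pi]
  calc ∏ j, (μ j) (Function.update (fun _ => Set.univ) i s j)
      = ∏ j, if j = i then (μ i) s else 1 := by
        refine Finset.prod_congr rfl fun j _ => ?_
        rcases eq_or_ne j i with rfl | h
        · simp
        · simp [Function.update_of_ne h, measure_univ, h]
    _ = (μ i) s := by simp

lemma map_bind_aux {α β γ : Type*} [MeasurableSpace α] [MeasurableSpace β] [MeasurableSpace γ]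
    (μ : Measure α) {κ : α → Measure β} (hκ : Measurable κ) {f : β → γ} (hf : Measurable f) :
    (μ.bind κ).map f = μ.bind (fun a => (κ a).map f) := by
  have hdm : Measurable fun x : β => Measure.dirac (f x) := Measure.measurable_dirac.comp hf
  rw [← Measure.bind_dirac_eq_map _ hf, Measure.bind_bind hκ.aemeasurable hdm.aemeasurable]
  simp_rw [Measure.bind_dirac_eq_map _ hf]

lemma bind_map_aux {α β γ : Type*} [MeasurableSpace α] [MeasurableSpace β] [MeasurableSpace γ]
    (μ : Measure α) {κ : β → Measure γ} (hκ : Measurable κ) {g : α → β} (hg : Measurable g) :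
    μ.bind (fun a => κ (g a)) = (μ.map g).bind κ := by
  have hdm : Measurable fun x : α => Measure.dirac (g x) := Measure.measurable_dirac.comp hg
  rw [← Measure.bind_dirac_eq_map _ hg, Measure.bind_bind hdm.aemeasurable hκ.aemeasurable]
  simp_rw [Measure.dirac_bind hκ]

set_option maxHeartbeats 1600000 in
open NNReal in
/-- Under the Lyapunov condition, the particle system satisfies
`E[Φ_{n+1}[η^N_n](V)] ≤ A(n+1)·E[η^N_0(V)] + c·Σ_{k=1}^{n+1} Π_{j=k+1}^{n+1}(a_j+b_j)`,
and by exchangeability `E[V(X^1_n)] = E[η^N_n(V)]`. -/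
theorem stmt11 {d N : ℕ} (hN : 0 < N)
    (K : ℕ → Measure (Ed d) → Ed d → Measure (Ed d))
    (hK : ∀ n η x, IsProbabilityMeasure (K n η x))
    (hKm : ∀ n, Measurable fun xz : (Fin N → Ed d) × Ed d => K n (emp xz.1) xz.2)
    (V : Ed d → ℝ≥0∞) (hV : Measurable V)
    (a b : ℕ → ℝ≥0) (c : ℝ≥0)
    (hLyap : ∀ n (ηm : Measure (Ed d)), IsProbabilityMeasure ηm → ∀ x,
      ∫⁻ y, V y ∂(K n ηm x) ≤ (a n : ℝ≥0∞) * V x + (b n : ℝ≥0∞) * ∫⁻ y, V y ∂ηm + c)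
    -- particle system: i.i.d. initial condition, conditionally independent updates
    (η0 : Measure (Ed d)) (hη0 : IsProbabilityMeasure η0)
    (L : ℕ → Measure (Fin N → Ed d))
    (hL0 : L 0 = Measure.pi fun _ => η0)
    (hdyn : ∀ n, L (n + 1) =
      (L n).bind (fun x => Measure.pi fun i => K (n + 1) (emp x) (x i)))
    (hη0V : ∫⁻ x, (∫⁻ y, V y ∂(emp x)) ∂(L 0) < ⊤) :
    (∀ n, ∫⁻ x, (∫⁻ y, V y ∂((emp x).bind (K (n + 1) (emp x)))) ∂(L n)
      ≤ (∏ i ∈ Finset.Icc 1 (n + 1), ((a i + b i : ℝ≥0) : ℝ≥0∞)) *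
          ∫⁻ x, (∫⁻ y, V y ∂(emp x)) ∂(L 0)
        + (c : ℝ≥0∞) * ∑ k ∈ Finset.Icc 1 (n + 1),
            ∏ j ∈ Finset.Icc (k + 1) (n + 1), ((a j + b j : ℝ≥0) : ℝ≥0∞))
    ∧ (∀ n, ∫⁻ x, V (x ⟨0, hN⟩) ∂(L n) = ∫⁻ x, (∫⁻ y, V y ∂(emp x)) ∂(L n)) := by
  classical
  have hNne : (N : ℝ≥0∞) ≠ 0 := Nat.cast_ne_zero.2 hN.ne'
  have hNinv : (N : ℝ≥0∞)⁻¹ * N = 1 := ENNReal.inv_mul_cancel hNne (natCast_ne_top N)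
  -- empirical integrals
  have hempf : ∀ (f : Ed d → ℝ≥0∞), Measurable f → ∀ x : Fin N → Ed d,
      ∫⁻ y, f y ∂(emp x) = (N : ℝ≥0∞)⁻¹ * ∑ i, f (x i) := by
    intro f hf x
    rw [emp, lintegral_smul_measure, lintegral_finset_sum_measure]
    simp [lintegral_dirac' _ hf]
  have hempP : ∀ x : Fin N → Ed d, IsProbabilityMeasure (emp x) := by
    intro x
    constructor
    rw [emp]
    simp only [Measure.smul_apply, Measure.coe_finset_sum, Finset.sum_apply,
      measure_univ, Finset.sum_const, Finset.card_univ, Fintype.card_fin, nsmul_eq_mul,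
      mul_one, smul_eq_mul]
    exact hNinv
  -- measurability facts
  have hKx : ∀ n (x : Fin N → Ed d), Measurable fun z => K n (emp x) z :=
    fun n x => (hKm n).comp (f := fun z : Ed d => ((x, z) : (Fin N → Ed d) × Ed d))
      (measurable_const.prodMk measurable_id)
  have hKi : ∀ n (i : Fin N), Measurable fun x : Fin N → Ed d => K n (emp x) (x i) :=
    fun n i => (hKm n).comp
      (f := fun x : Fin N → Ed d => ((x, x i) : (Fin N → Ed d) × Ed d))
      (measurable_id.prodMk (measurable_pi_apply i))
  have hκm : ∀ n, Measurable fun x : Fin N → Ed d =>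
      Measure.pi fun i => K (n + 1) (emp x) (x i) :=
    fun n => measurable_pi_of_measurable _ (fun x i => hK _ _ _) (fun i => hKi (n + 1) i)
  have hsum_m : Measurable fun x : Fin N → Ed d => ∑ i, V (x i) :=
    Finset.measurable_sum _ fun i _ => hV.comp (measurable_pi_apply i)
  have hEm : Measurable fun x : Fin N → Ed d => ∫⁻ y, V y ∂(emp x) := by
    have h : (fun x : Fin N → Ed d => ∫⁻ y, V y ∂(emp x))
        = fun x => (N : ℝ≥0∞)⁻¹ * ∑ i, V (x i) := funext (hempf V hV)
    rw [h]
    exact hsum_m.const_mul _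
  -- probability of L n
  have hLP : ∀ n, IsProbabilityMeasure (L n) := by
    intro n
    induction n with
    | zero => rw [hL0]; infer_instance
    | succ n ihn =>
      rw [hdyn n]
      constructor
      rw [Measure.bind_apply MeasurableSet.univ (hκm n).aemeasurable]
      have h1 : ∀ x : Fin N → Ed d,
          (Measure.pi fun i => K (n + 1) (emp x) (x i)) Set.univ = 1 := fun x => by
        haveI := fun i => hK (n + 1) (emp x) (x i)
        exact measure_univ
      simp only [h1, lintegral_one]
      exact ihn.measure_univ
  -- bind over emp
  have hG : ∀ n (x : Fin N → Ed d), ∫⁻ y, V y ∂((emp x).bind (K (n + 1) (emp x)))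
      = (N : ℝ≥0∞)⁻¹ * ∑ i, ∫⁻ y, V y ∂(K (n + 1) (emp x) (x i)) := by
    intro n x
    have hg : Measurable fun z : Ed d => ∫⁻ y, V y ∂(K (n + 1) (emp x) z) :=
      (Measure.measurable_lintegral hV).comp (hKx (n + 1) x)
    rw [Measure.lintegral_bind (hKx (n + 1) x).aemeasurable hV.aemeasurable, hempf _ hg]
  -- pointwise one-step Lyapunov bound
  have hstep : ∀ n (x : Fin N → Ed d), ∫⁻ y, V y ∂((emp x).bind (K (n + 1) (emp x)))
      ≤ ((a (n + 1) + b (n + 1) : ℝ≥0) : ℝ≥0∞) * ∫⁻ y, V y ∂(emp x) + c := by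
    intro n x
    have hE : ∫⁻ y, V y ∂(emp x) = (N : ℝ≥0∞)⁻¹ * ∑ i, V (x i) := hempf V hV x
    rw [hG n x, hE, ENNReal.coe_add]
    set A := (a (n + 1) : ℝ≥0∞)
    set B := (b (n + 1) : ℝ≥0∞)
    set S := ∑ i, V (x i) with hS
    calc (N : ℝ≥0∞)⁻¹ * ∑ i, ∫⁻ y, V y ∂(K (n + 1) (emp x) (x i))
        ≤ (N : ℝ≥0∞)⁻¹ * ∑ i : Fin N, (A * V (x i) + B * ((N : ℝ≥0∞)⁻¹ * S) + c) := by
          refine mul_le_mul_right (Finset.sum_le_sum fun i _ => ?_) _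
          have h := hLyap (n + 1) (emp x) (hempP x) (x i)
          rwa [hE] at h
      _ = A * ((N : ℝ≥0∞)⁻¹ * S) + ((N : ℝ≥0∞)⁻¹ * N) * (B * ((N : ℝ≥0∞)⁻¹ * S) + c) := by
          simp only [Finset.sum_add_distrib, Finset.sum_const, Finset.card_univ,
            Fintype.card_fin, nsmul_eq_mul, ← Finset.mul_sum, ← hS]
          ring
      _ = (A + B) * ((N : ℝ≥0∞)⁻¹ * S) + c := by rw [hNinv, one_mul]; ring
  -- recursion for the mean empirical mass
  have hrec : ∀ n, ∫⁻ x, (∫⁻ y, V y ∂(emp x)) ∂(L (n + 1))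
      = ∫⁻ x, (∫⁻ y, V y ∂((emp x).bind (K (n + 1) (emp x)))) ∂(L n) := by
    intro n
    rw [hdyn n, Measure.lintegral_bind (hκm n).aemeasurable hEm.aemeasurable]
    refine lintegral_congr fun x => ?_
    haveI := fun i => hK (n + 1) (emp x) (x i)
    have hev : ∀ i : Fin N, ∫⁻ z, V (z i) ∂(Measure.pi fun j => K (n + 1) (emp x) (x j))
        = ∫⁻ y, V y ∂(K (n + 1) (emp x) (x i)) := by
      intro i
      rw [← pi_map_eval (fun j => K (n + 1) (emp x) (x j)) i,
        lintegral_map hV (measurable_pi_apply i)]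
    calc ∫⁻ z, (∫⁻ y, V y ∂(emp z)) ∂(Measure.pi fun j => K (n + 1) (emp x) (x j))
        = ∫⁻ z, ((N : ℝ≥0∞)⁻¹ * ∑ i, V (z i))
            ∂(Measure.pi fun j => K (n + 1) (emp x) (x j)) :=
          lintegral_congr fun z => hempf V hV z
      _ = (N : ℝ≥0∞)⁻¹ * ∑ i, ∫⁻ z, V (z i)
            ∂(Measure.pi fun j => K (n + 1) (emp x) (x j)) := by
          rw [lintegral_const_mul _ hsum_m,
            lintegral_finset_sum (f := fun (i : Fin N) (z : Fin N → Ed d) => V (z i)) _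
              (fun i _ => hV.comp (measurable_pi_apply i))]
      _ = (N : ℝ≥0∞)⁻¹ * ∑ i, ∫⁻ y, V y ∂(K (n + 1) (emp x) (x i)) := by
          rw [Finset.sum_congr rfl fun i _ => hev i]
      _ = _ := (hG n x).symm
  -- integrated one-step bound
  have hSb : ∀ n, ∫⁻ x, (∫⁻ y, V y ∂((emp x).bind (K (n + 1) (emp x)))) ∂(L n)
      ≤ ((a (n + 1) + b (n + 1) : ℝ≥0) : ℝ≥0∞) *
          ∫⁻ x, (∫⁻ y, V y ∂(emp x)) ∂(L n) + c := by
    intro n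
    haveI := hLP n
    calc ∫⁻ x, (∫⁻ y, V y ∂((emp x).bind (K (n + 1) (emp x)))) ∂(L n)
        ≤ ∫⁻ x, (((a (n + 1) + b (n + 1) : ℝ≥0) : ℝ≥0∞) * (∫⁻ y, V y ∂(emp x)) + c)
            ∂(L n) := lintegral_mono (hstep n)
      _ = ((a (n + 1) + b (n + 1) : ℝ≥0) : ℝ≥0∞) *
            ∫⁻ x, (∫⁻ y, V y ∂(emp x)) ∂(L n) + c := by
          rw [lintegral_add_right _ measurable_const, lintegral_const_mul _ hEm,
            lintegral_const, measure_univ, mul_one]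
  constructor
  · -- part 1
    intro n
    induction n with
    | zero =>
      have h := hSb 0
      simpa using h
    | succ n ih =>
      have hP : (∏ i ∈ Finset.Icc 1 (n + 1 + 1), ((a i + b i : ℝ≥0) : ℝ≥0∞))
          = (∏ i ∈ Finset.Icc 1 (n + 1), ((a i + b i : ℝ≥0) : ℝ≥0∞)) *
            ((a (n + 2) + b (n + 2) : ℝ≥0) : ℝ≥0∞) :=
        Finset.prod_Icc_succ_top (by omega) _
      have hSig : (∑ k ∈ Finset.Icc 1 (n + 1 + 1),
            ∏ j ∈ Finset.Icc (k + 1) (n + 1 + 1), ((a j + b j : ℝ≥0) : ℝ≥0∞))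
          = (∑ k ∈ Finset.Icc 1 (n + 1),
              ∏ j ∈ Finset.Icc (k + 1) (n + 1), ((a j + b j : ℝ≥0) : ℝ≥0∞)) *
              ((a (n + 2) + b (n + 2) : ℝ≥0) : ℝ≥0∞) + 1 := by
        rw [Finset.sum_Icc_succ_top (by omega)]
        rw [show Finset.Icc (n + 1 + 1 + 1) (n + 1 + 1) = ∅ from
          Finset.Icc_eq_empty (by omega), Finset.prod_empty]
        congr 1
        rw [Finset.sum_mul]
        refine Finset.sum_congr rfl fun k hk => ?_
        have hk' : k ≤ n + 1 := (Finset.mem_Icc.mp hk).2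
        exact Finset.prod_Icc_succ_top (by omega) _
      calc ∫⁻ x, (∫⁻ y, V y ∂((emp x).bind (K (n + 1 + 1) (emp x)))) ∂(L (n + 1))
          ≤ ((a (n + 2) + b (n + 2) : ℝ≥0) : ℝ≥0∞) *
              ∫⁻ x, (∫⁻ y, V y ∂(emp x)) ∂(L (n + 1)) + c := hSb (n + 1)
        _ = ((a (n + 2) + b (n + 2) : ℝ≥0) : ℝ≥0∞) *
              ∫⁻ x, (∫⁻ y, V y ∂((emp x).bind (K (n + 1) (emp x)))) ∂(L n) + c := by
            rw [hrec n]
        _ ≤ ((a (n + 2) + b (n + 2) : ℝ≥0) : ℝ≥0∞) *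
              ((∏ i ∈ Finset.Icc 1 (n + 1), ((a i + b i : ℝ≥0) : ℝ≥0∞)) *
                ∫⁻ x, (∫⁻ y, V y ∂(emp x)) ∂(L 0)
              + (c : ℝ≥0∞) * ∑ k ∈ Finset.Icc 1 (n + 1),
                  ∏ j ∈ Finset.Icc (k + 1) (n + 1), ((a j + b j : ℝ≥0) : ℝ≥0∞)) + c :=
            add_le_add_left (mul_le_mul_right ih _) _
        _ = _ := by
            rw [hP, hSig]
            ring
  · -- part 2: exchangeability
    have hPm : ∀ σ : Equiv.Perm (Fin N), Measurable fun x : Fin N → Ed d => x ∘ σ :=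
      fun σ => measurable_pi_lambda _ fun j => measurable_pi_apply (σ j)
    have hempσ : ∀ (σ : Equiv.Perm (Fin N)) (x : Fin N → Ed d), emp (x ∘ σ) = emp x := by
      intro σ x
      simp only [emp, Function.comp]
      congr 1
      exact Equiv.sum_comp σ fun i => Measure.dirac (x i)
    have hmapσ : ∀ (σ : Equiv.Perm (Fin N)) (μ : Fin N → Measure (Ed d)),
        (∀ i, IsProbabilityMeasure (μ i)) →
        (Measure.pi μ).map (fun x => x ∘ σ) = Measure.pi fun i => μ (σ i) := by
      intro σ μ hμ
      haveI := hμ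
      haveI : ∀ i, IsProbabilityMeasure ((fun i => μ (σ i)) (σ.symm i)) :=
        fun i => hμ _
      have h := Measure.pi_map_piCongrLeft (β := fun _ => Ed d) σ.symm fun i => μ (σ i)
      have hco : ⇑(MeasurableEquiv.piCongrLeft (fun _ => Ed d) (σ.symm : Fin N ≃ Fin N))
          = fun x : Fin N → Ed d => x ∘ σ := by
        funext x
        funext j
        have hj : j = σ.symm (σ j) := (Equiv.symm_apply_apply σ j).symm
        calc (MeasurableEquiv.piCongrLeft (fun _ => Ed d) (σ.symm : Fin N ≃ Fin N)) x j
            = (MeasurableEquiv.piCongrLeft (fun _ => Ed d) (σ.symm : Fin N ≃ Fin N)) x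
                (σ.symm (σ j)) := by rw [← hj]
          _ = x (σ j) := MeasurableEquiv.piCongrLeft_apply_apply _ _ _
          _ = (x ∘ σ) j := rfl
      rw [hco] at h
      have hfun : (fun i => μ (σ (σ.symm i))) = μ := by
        funext i
        rw [Equiv.apply_symm_apply]
      rw [hfun] at h
      exact h
    have hLσ : ∀ n (σ : Equiv.Perm (Fin N)), (L n).map (fun x => x ∘ σ) = L n := by
      intro n
      induction n with
      | zero =>
        intro σ
        rw [hL0]
        exact hmapσ σ _ fun _ => hη0
      | succ n ihn =>
        intro σ
        rw [hdyn n, map_bind_aux _ (hκm n) (hPm σ)]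
        have h1 : (fun x : Fin N → Ed d =>
            (Measure.pi fun i => K (n + 1) (emp x) (x i)).map (fun z => z ∘ σ))
            = fun x : Fin N → Ed d =>
              Measure.pi fun i => K (n + 1) (emp (x ∘ σ)) ((x ∘ σ) i) := by
          funext x
          rw [hmapσ σ _ fun i => hK _ _ _, hempσ σ x]
          rfl
        rw [h1, bind_map_aux _ (hκm n) (hPm σ), ihn σ]
    have hexch : ∀ n (i : Fin N), ∫⁻ x, V (x i) ∂(L n) = ∫⁻ x, V (x ⟨0, hN⟩) ∂(L n) := by
      intro n i
      set σ := Equiv.swap (⟨0, hN⟩ : Fin N) i with hσ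
      calc ∫⁻ x, V (x i) ∂(L n)
          = ∫⁻ x, V (x i) ∂((L n).map fun x => x ∘ σ) := by rw [hLσ n σ]
        _ = ∫⁻ x, V ((x ∘ σ) i) ∂(L n) :=
            lintegral_map (hV.comp (measurable_pi_apply i)) (hPm σ)
        _ = ∫⁻ x, V (x ⟨0, hN⟩) ∂(L n) := by
            simp only [Function.comp, hσ, Equiv.swap_apply_right]
    intro n
    calc ∫⁻ x, V (x ⟨0, hN⟩) ∂(L n)
        = (N : ℝ≥0∞)⁻¹ * ∑ i : Fin N, ∫⁻ x, V (x i) ∂(L n) := by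
          rw [Finset.sum_congr rfl fun i _ => hexch n i, Finset.sum_const,
            Finset.card_univ, Fintype.card_fin, nsmul_eq_mul, ← mul_assoc, hNinv, one_mul]
      _ = ∫⁻ x, ((N : ℝ≥0∞)⁻¹ * ∑ i, V (x i)) ∂(L n) := by
          rw [lintegral_const_mul _ hsum_m,
            lintegral_finset_sum (f := fun (i : Fin N) (x : Fin N → Ed d) => V (x i)) _
              (fun i _ => hV.comp (measurable_pi_apply i))]
      _ = ∫⁻ x, (∫⁻ y, V y ∂(emp x)) ∂(L n) :=
          lintegral_congr fun x => (hempf V hV x).symm
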